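/- For any distribution of x with finite second moments and any w, v ∈ ℝ^{d+1} with w ≠ v, letting u = (w − v)/‖w − v‖: ⟨∇F(w), w − v⟩ ≥ ‖w − v‖²·E[(u^⊤x)²·𝟙[w^⊤x ≥ 0 and v^⊤x ≥ 0]]. -/
import Mathlib


open MeasureTheory ProbabilityTheory Real
open scoped RealInnerProductSpace ENNReal

noncomputable section

abbrev Vec (d : ℕ) := EuclideanSpace ℝ (Fin d)
abbrev Par (d : ℕ) := EuclideanSpace ℝ (Fin d) × ℝ

/-- The ReLU function. -/
def relu (z : ℝ) : ℝ := max z 0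

/-- Its derivative (with the convention `relu' 0 = 1`). -/
def relu' (z : ℝ) : ℝ := if 0 ≤ z then 1 else 0

/-- `w^⊤ x` for a parameter `w = (w̃, b_w)` and a point `x = (x̃, 1)`. -/
def pdot {d : ℕ} (w : Par d) (x : Vec d) : ℝ := ⟪w.1, x⟫ + w.2

/-- Euclidean inner product on the parameter space `ℝ^{d+1}`. -/
def pip {d : ℕ} (w v : Par d) : ℝ := ⟪w.1, v.1⟫ + w.2 * v.2

/-- Euclidean norm on the parameter space `ℝ^{d+1}`. -/
def pnorm {d : ℕ} (w : Par d) : ℝ := Real.sqrt (‖w.1‖ ^ 2 + w.2 ^ 2)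

/-- The realizable loss `F(w) = (1/2) E[(σ(w^⊤x) − σ(v^⊤x))²]`. -/
def F {d : ℕ} (μx : Measure (Vec d)) (v w : Par d) : ℝ :=
  (1/2) * ∫ x, (relu (pdot w x) - relu (pdot v x)) ^ 2 ∂μx

/-- The gradient `∇F(w) = E[(σ(w^⊤x) − σ(v^⊤x)) σ'(w^⊤x) x]` with `x = (x̃, 1)`. -/
def gradF {d : ℕ} (μx : Measure (Vec d)) (v w : Par d) : Par d :=
  (∫ x, ((relu (pdot w x) - relu (pdot v x)) * relu' (pdot w x)) • x ∂μx,
   ∫ x, (relu (pdot w x) - relu (pdot v x)) * relu' (pdot w x) ∂μx)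

/-- The population loss `L(w) = (1/2) E[(σ(w^⊤x) − y)²]`. -/
def L {d : ℕ} (μ : Measure (Vec d × ℝ)) (w : Par d) : ℝ :=
  (1/2) * ∫ p, (relu (pdot w p.1) - p.2) ^ 2 ∂μ

/-- The gradient `∇L(w) = E[(σ(w^⊤x) − y) σ'(w^⊤x) x]` with `x = (x̃, 1)`. -/
def gradL {d : ℕ} (μ : Measure (Vec d × ℝ)) (w : Par d) : Par d :=
  (∫ p, ((relu (pdot w p.1) - p.2) * relu' (pdot w p.1)) • p.1 ∂μ,
   ∫ p, (relu (pdot w p.1) - p.2) * relu' (pdot w p.1) ∂μ)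

/-- The hypothesis class `H = {(w̃,b_w) : ‖w̃‖ ∈ [1/C₁, C₁], |b_w| ≤ C₂}`. -/
def Hset (d : ℕ) (C₁ C₂ : ℝ) : Set (Par d) :=
  {w | ‖w.1‖ ∈ Set.Icc C₁⁻¹ C₁ ∧ |w.2| ≤ C₂}

/-- Population gradient descent iterates `w_{t+1} = w_t − η ∇L(w_t)`. -/
def gdIter {d : ℕ} (μ : Measure (Vec d × ℝ)) (η : ℝ) (w0 : Par d) : ℕ → Par d
  | 0 => w0
  | t + 1 => gdIter μ η w0 t - η • gradL μ (gdIter μ η w0 t)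

/-- `O(1)`-regularity of a marginal distribution on `ℝ^d`. -/
structure Regular {d : ℕ} (μx : Measure (Vec d))
    (β₂' β₂ β₃ β₄ β₅ : ℝ) (β₀ : ℝ → ℝ) : Prop where
  int_four : ∀ u : Vec d, ‖u‖ = 1 → Integrable (fun x => ⟪u, x⟫ ^ 4) μx
  second_lb : ∀ u : Vec d, ‖u‖ = 1 → β₂'⁻¹ ≤ ∫ x, ⟪u, x⟫ ^ 2 ∂μx
  second_ub : ∀ u : Vec d, ‖u‖ = 1 → ∫ x, ⟪u, x⟫ ^ 2 ∂μx ≤ β₂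
  fourth_ub : ∀ u : Vec d, ‖u‖ = 1 → ∫ x, ⟪u, x⟫ ^ 4 ∂μx ≤ β₄
  anticonc : ∀ u : Vec d, ‖u‖ = 1 → ∀ δ : ℝ, 0 < δ → ∀ t : ℝ,
    (μx {x | ⟪u, x⟫ ∈ Set.Ioo (t - δ) (t + δ)}).toReal ≤ min (β₃ * δ) 1
  spread : ∀ u : Vec d, ‖u‖ = 1 → ∀ b : ℝ, β₀ |b| ≤ ∫ x, relu (⟪u, x⟫ + b) ∂μx
  spread_pos : ∀ r : ℝ, 0 ≤ r → 0 < β₀ r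
  proj2d : ∀ u₁ u₂ : Vec d, ‖u₁‖ = 1 → ‖u₂‖ = 1 → ⟪u₁, u₂⟫ = 0 →
    ∀ ε : ℝ, 0 < ε →
      ∃ G : Set ℝ, MeasurableSet G ∧ 1 - ε ≤ (μx {x | ⟪u₂, x⟫ ∈ G}).toReal ∧
        ∀ᵐ x ∂μx, ⟪u₂, x⟫ ∈ G →
          β₅ * ∫ x', relu ⟪u₁, x'⟫ ∂μx ≤
            (μx[fun x' => relu ⟪u₁, x'⟫ |
              MeasurableSpace.comap (fun x' : Vec d => ⟪u₂, x'⟫) Real.measurableSpace]) x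

/-- The standard Gaussian measure `N(0, I_d)` on `ℝ^d`. -/
def stdGaussian (d : ℕ) : Measure (Vec d) :=
  (Measure.pi fun _ : Fin d => gaussianReal 0 1).map
    fun x => (EuclideanSpace.equiv (Fin d) ℝ).symm x

/-- The uniform distribution on the unit sphere of `ℝ^d`
(obtained by normalizing a standard Gaussian vector). -/
def uniformSphere (d : ℕ) : Measure (Vec d) :=
  (stdGaussian d).map fun x => ‖x‖⁻¹ • x

/-- The radially symmetric initialization distribution of `w₀ = (ρ s ŵ, 0)`, where `ŵ` is a
uniformly random unit vector and `ρ` is the absolute value of an `N(0, β²)` variable. -/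
def initDist (d : ℕ) (β s : ℝ) : Measure (Par d) :=
  ((gaussianReal 0 (β ^ 2).toNNReal).prod (uniformSphere d)).map
    fun p => ((|p.1| * s) • p.2, (0 : ℝ))



lemma pdot_sub {d : ℕ} (w v : Par d) (x : Vec d) :
    pdot (w - v) x = pdot w x - pdot v x := by
  simp [pdot, inner_sub_left]; ring

lemma pdot_smul {d : ℕ} (c : ℝ) (p : Par d) (x : Vec d) :
    pdot (c • p) x = c * pdot p x := by
  unfold pdot
  rw [Prod.smul_fst, Prod.smul_snd, real_inner_smul_left, smul_eq_mul]
  ring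

lemma key_ineq (a b : ℝ) :
    (a - b) ^ 2 * (if 0 ≤ a ∧ 0 ≤ b then (1:ℝ) else 0) ≤
      (relu a - relu b) * relu' a * (a - b) := by
  unfold relu relu'
  rcases le_or_gt 0 a with ha | ha
  · rw [max_eq_left ha, if_pos ha]
    rcases le_or_gt 0 b with hb | hb
    · rw [max_eq_left hb, if_pos ⟨ha, hb⟩]; nlinarith [sq_nonneg (a - b)]
    · rw [max_eq_right hb.le, if_neg (by simp [hb.not_ge])]
      nlinarith
  · rw [if_neg ha.not_ge, if_neg (by simp [ha.not_ge])]
    simp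

lemma abs_relu_sub_relu (a b : ℝ) : |relu a - relu b| ≤ |a - b| :=
  abs_max_sub_max_le_abs a b 0

lemma abs_relu' (z : ℝ) : |relu' z| ≤ 1 := by
  unfold relu'; split_ifs <;> simp

lemma measurable_relu : Measurable relu :=
  (continuous_max.comp (continuous_id.prodMk continuous_const)).measurable

lemma measurable_relu' : Measurable relu' :=
  Measurable.ite (measurableSet_le measurable_const measurable_id)
    measurable_const measurable_const

lemma continuous_pdot {d : ℕ} (w : Par d) : Continuous fun x : Vec d => pdot w x := by
  unfold pdot
  exact (continuous_const.inner continuous_id).add continuous_const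

theorem aux_main (d : ℕ) (μx : Measure (Vec d)) [IsProbabilityMeasure μx]
    (h2 : ∀ u : Vec d, Integrable (fun x => ⟪u, x⟫ ^ 2) μx)
    (w v : Par d) (hwv : w ≠ v) :
    pnorm (w - v) ^ 2 *
        ∫ x, pdot ((pnorm (w - v))⁻¹ • (w - v)) x ^ 2 *
          Set.indicator {x : Vec d | 0 ≤ pdot w x ∧ 0 ≤ pdot v x} (fun _ => (1 : ℝ)) x ∂μx ≤
      (⟪(∫ x, ((relu (pdot w x) - relu (pdot v x)) * relu' (pdot w x)) • x ∂μx), (w-v).1⟫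
        + (∫ x, (relu (pdot w x) - relu (pdot v x)) * relu' (pdot w x) ∂μx) * (w-v).2) := by
  set p := w - v with hp
  set f : Vec d → ℝ := fun x => (relu (pdot w x) - relu (pdot v x)) * relu' (pdot w x) with hfdef
  -- positivity of pnorm p
  have hpne : p ≠ 0 := sub_ne_zero.mpr hwv
  have hc : 0 < pnorm p := by
    unfold pnorm
    rw [Real.sqrt_pos]
    by_contra h
    push_neg at h
    have e1 : ‖p.1‖ = 0 := by nlinarith [norm_nonneg p.1, sq_nonneg p.2, sq_nonneg ‖p.1‖]
    have e2 : p.2 = 0 := by nlinarith [sq_nonneg ‖p.1‖]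
    exact hpne (Prod.ext (norm_eq_zero.mp e1) e2)
  -- basic integrability facts
  have hint1 : ∀ u : Vec d, Integrable (fun x => ⟪u, x⟫) μx := by
    intro u
    refine Integrable.mono' ((integrable_const (1:ℝ)).add (h2 u))
      ((continuous_const.inner continuous_id).measurable.aestronglyMeasurable)
      (ae_of_all _ fun x => ?_)
    have : |⟪u, x⟫| ≤ 1 + ⟪u, x⟫ ^ 2 := by nlinarith [sq_nonneg (|⟪u, x⟫| - 1), sq_abs ⟪u, x⟫]
    simpa using this
  have hsq : ∀ q : Par d, Integrable (fun x => pdot q x ^ 2) μx := by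
    intro q
    have he : (fun x : Vec d => pdot q x ^ 2)
        = fun x => ⟪q.1, x⟫ ^ 2 + (2 * q.2) * ⟪q.1, x⟫ + q.2 ^ 2 := by
      funext x; unfold pdot; ring
    rw [he]
    exact ((h2 q.1).add ((hint1 q.1).const_mul _)).add (integrable_const _)
  have hnormsq : Integrable (fun x : Vec d => ‖x‖ ^ 2) μx := by
    have he : (fun x : Vec d => ‖x‖ ^ 2)
        = fun x => ∑ i, ⟪EuclideanSpace.single i (1:ℝ), x⟫ ^ 2 := by
      funext x
      rw [EuclideanSpace.norm_eq, Real.sq_sqrt (by positivity)]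
      refine Finset.sum_congr rfl fun i _ => ?_
      rw [EuclideanSpace.inner_single_left]
      simp [Real.norm_eq_abs, sq_abs]
    rw [he]
    exact integrable_finset_sum _ fun i _ => h2 _
  -- pointwise bound on f
  have habsf : ∀ x, |f x| ≤ |pdot p x| := by
    intro x
    rw [hfdef, pdot_sub, abs_mul]
    calc |relu (pdot w x) - relu (pdot v x)| * |relu' (pdot w x)|
        ≤ |pdot w x - pdot v x| * 1 :=
          mul_le_mul (abs_relu_sub_relu _ _) (abs_relu' _) (abs_nonneg _) (abs_nonneg _)
      _ = |pdot w x - pdot v x| := mul_one _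
  have hfm : Measurable f :=
    ((measurable_relu.comp (continuous_pdot w).measurable).sub
      (measurable_relu.comp (continuous_pdot v).measurable)).mul
      (measurable_relu'.comp (continuous_pdot w).measurable)
  have hf_int : Integrable f μx := by
    refine Integrable.mono' ((integrable_const (1:ℝ)).add (hsq p))
      hfm.aestronglyMeasurable (ae_of_all _ fun x => ?_)
    have h1 := habsf x
    have : |pdot p x| ≤ 1 + pdot p x ^ 2 := by
      nlinarith [sq_nonneg (|pdot p x| - 1), sq_abs (pdot p x)]
    simpa using h1.trans this
  have hfx_int : Integrable (fun x => f x • x) μx := by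
    refine Integrable.mono' ((hsq p).add hnormsq)
      ((hfm.smul measurable_id).aestronglyMeasurable) (ae_of_all _ fun x => ?_)
    rw [norm_smul]
    calc ‖f x‖ * ‖x‖ ≤ |pdot p x| * ‖x‖ :=
          mul_le_mul_of_nonneg_right (habsf x) (norm_nonneg _)
      _ ≤ pdot p x ^ 2 + ‖x‖ ^ 2 := by
          nlinarith [sq_nonneg (|pdot p x| - ‖x‖), sq_abs (pdot p x), abs_nonneg (pdot p x),
            norm_nonneg x]
  have h_int1 : Integrable (fun x => f x * ⟪p.1, x⟫) μx := by
    refine Integrable.mono' ((hsq p).add (h2 p.1))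
      (hfm.mul (continuous_const.inner continuous_id).measurable).aestronglyMeasurable
      (ae_of_all _ fun x => ?_)
    rw [Real.norm_eq_abs, abs_mul]
    calc |f x| * |⟪p.1, x⟫| ≤ |pdot p x| * |⟪p.1, x⟫| :=
          mul_le_mul_of_nonneg_right (habsf x) (abs_nonneg _)
      _ ≤ pdot p x ^ 2 + ⟪p.1, x⟫ ^ 2 := by
          nlinarith [sq_nonneg (|pdot p x| - |⟪p.1, x⟫|), sq_abs (pdot p x), sq_abs ⟪p.1, x⟫,
            abs_nonneg (pdot p x), abs_nonneg ⟪p.1, x⟫]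
  -- rewrite RHS as a single integral
  have hR : ⟪(∫ x, f x • x ∂μx), p.1⟫ + (∫ x, f x ∂μx) * p.2
      = ∫ x, f x * pdot p x ∂μx := by
    have h1 : ⟪(∫ x, f x • x ∂μx), p.1⟫ = ∫ x, f x * ⟪p.1, x⟫ ∂μx := by
      rw [real_inner_comm, ← integral_inner hfx_int]
      congr 1; funext x; rw [real_inner_smul_right]
    have h2' : (∫ x, f x ∂μx) * p.2 = ∫ x, f x * p.2 ∂μx := (integral_mul_const _ _).symm
    rw [h1, h2', ← integral_add h_int1 (hf_int.mul_const p.2)]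
    congr 1; funext x; unfold pdot; ring
  rw [hR]
  -- rewrite LHS
  have hL : pnorm p ^ 2 *
      ∫ x, pdot ((pnorm p)⁻¹ • p) x ^ 2 *
        Set.indicator {x : Vec d | 0 ≤ pdot w x ∧ 0 ≤ pdot v x} (fun _ => (1 : ℝ)) x ∂μx
      = ∫ x, pdot p x ^ 2 *
        Set.indicator {x : Vec d | 0 ≤ pdot w x ∧ 0 ≤ pdot v x} (fun _ => (1 : ℝ)) x ∂μx := by
    simp_rw [pdot_smul, mul_pow, mul_assoc]
    rw [integral_const_mul, ← mul_assoc, ← mul_pow, mul_inv_cancel₀ hc.ne', one_pow, one_mul]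
  rw [hL]
  -- final comparison
  have hSm : MeasurableSet {x : Vec d | 0 ≤ pdot w x ∧ 0 ≤ pdot v x} := by
    exact (measurableSet_le measurable_const (continuous_pdot w).measurable).inter
      (measurableSet_le measurable_const (continuous_pdot v).measurable)
  have hind : ∀ x : Vec d,
      Set.indicator {x : Vec d | 0 ≤ pdot w x ∧ 0 ≤ pdot v x} (fun _ => (1 : ℝ)) x
      = if 0 ≤ pdot w x ∧ 0 ≤ pdot v x then (1:ℝ) else 0 := by
    intro x; rw [Set.indicator_apply]; rfl
  have hg_int : Integrable (fun x => pdot p x ^ 2 *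
      Set.indicator {x : Vec d | 0 ≤ pdot w x ∧ 0 ≤ pdot v x} (fun _ => (1 : ℝ)) x) μx := by
    refine Integrable.mono' (hsq p)
      ((((continuous_pdot p).measurable.pow_const 2).mul
        (measurable_const.indicator hSm)).aestronglyMeasurable) (ae_of_all _ fun x => ?_)
    rw [Real.norm_eq_abs, abs_mul, hind x]
    split_ifs <;> simp [sq_abs, abs_nonneg, sq_nonneg]
  have hh_int : Integrable (fun x => f x * pdot p x) μx := by
    refine Integrable.mono' (hsq p)
      (hfm.mul (continuous_pdot p).measurable).aestronglyMeasurable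
      (ae_of_all _ fun x => ?_)
    rw [Real.norm_eq_abs, abs_mul]
    calc |f x| * |pdot p x| ≤ |pdot p x| * |pdot p x| :=
          mul_le_mul_of_nonneg_right (habsf x) (abs_nonneg _)
      _ = pdot p x ^ 2 := by rw [← abs_mul, ← sq, abs_of_nonneg (sq_nonneg _)]
  exact integral_mono hg_int hh_int fun x => by
    rw [hind x, pdot_sub, hfdef]
    simpa [mul_comm, mul_assoc] using key_ineq (pdot w x) (pdot v x)


/-- With `u = (w − v)/‖w − v‖`,
`⟨∇F(w), w − v⟩ ≥ ‖w − v‖² E[(u^⊤x)² 𝟙[w^⊤x ≥ 0, v^⊤x ≥ 0]]`. -/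
theorem gradF_inner_ge_indicator (d : ℕ) (μx : Measure (Vec d)) [IsProbabilityMeasure μx]
    (h2 : ∀ u : Vec d, Integrable (fun x => ⟪u, x⟫ ^ 2) μx)
    (w v : Par d) (hwv : w ≠ v) :
    pnorm (w - v) ^ 2 *
        ∫ x, pdot ((pnorm (w - v))⁻¹ • (w - v)) x ^ 2 *
          Set.indicator {x : Vec d | 0 ≤ pdot w x ∧ 0 ≤ pdot v x} (fun _ => (1 : ℝ)) x ∂μx ≤
      pip (gradF μx v w) (w - v) := by
  exact aux_main d μx h2 w v hwv

end
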